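/- Let h be a q-Weil polynomial of degree 2g. Then every real root of h occurs with even multiplicity. -/

import Mathlib

open Polynomial

/-- `h` is a `q`-Weil polynomial of degree `2*g`: its complex roots consist of
`g` conjugate pairs, each of complex absolute value `√q`. -/
def IsWeil (q g : ℕ) (h : Polynomial ℤ) : Prop :=
  ∃ w : Fin g → ℂ,
    (∀ i, ‖w i‖ = Real.sqrt q) ∧
    h.map (Int.castRingHom ℂ) =
      ∏ i, ((Polynomial.X - Polynomial.C (w i)) *
            (Polynomial.X - Polynomial.C ((starRingEnd ℂ) (w i))))

lemma rootMult_prod {ι : Type*} (s : Finset ι) (f : ι → Polynomial ℂ)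
    (hf : ∀ i ∈ s, f i ≠ 0) (x : ℂ) :
    rootMultiplicity x (∏ i ∈ s, f i) = ∑ i ∈ s, rootMultiplicity x (f i) := by
  classical
  induction s using Finset.induction_on with
  | empty => simp
  | @insert a s' hns ih =>
    rw [Finset.prod_insert hns, Finset.sum_insert hns,
      Polynomial.rootMultiplicity_mul, ih (fun i hi => hf i (Finset.mem_insert_of_mem hi))]
    exact mul_ne_zero (hf a (Finset.mem_insert_self a s'))
      (Finset.prod_ne_zero_iff.2 fun i hi => hf i (Finset.mem_insert_of_mem hi))

theorem stmt11 (q g : ℕ) (hq : 0 < q) (h : Polynomial ℤ) (hW : IsWeil q g h) :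
    ∀ x : ℝ, Even (Polynomial.rootMultiplicity (x : ℂ) (h.map (Int.castRingHom ℂ))) := by
  classical
  intro x
  obtain ⟨w, _, hprod⟩ := hW
  rw [hprod, rootMult_prod _ _ (fun i _ => mul_ne_zero (X_sub_C_ne_zero _) (X_sub_C_ne_zero _))]
  refine Finset.even_sum _ fun i _ => ?_
  rw [rootMultiplicity_mul (mul_ne_zero (X_sub_C_ne_zero _) (X_sub_C_ne_zero _)),
    rootMultiplicity_X_sub_C, rootMultiplicity_X_sub_C]
  have : (x : ℂ) = w i ↔ (x : ℂ) = (starRingEnd ℂ) (w i) := by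
    constructor
    · intro hx
      have h2 := congrArg (starRingEnd ℂ) hx
      simp at h2
      exact h2
    · intro hx
      have h2 := congrArg (starRingEnd ℂ) hx
      simp at h2
      exact h2
  by_cases hx : (x : ℂ) = w i
  · simp [hx, ← this.1 hx]
  · have hx2 : ¬ (x : ℂ) = (starRingEnd ℂ) (w i) := fun hc => hx (this.2 hc)
    simp [hx, hx2]
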